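/- Let Ā be the 5×5 matrix over F₂ = ℤ/2ℤ with rows (1,1,0,0,0), (1,1,1,0,0), (1,1,1,1,0), (0,1,1,1,1), (0,0,1,1,1), and let (u,v) = uᵀ Ā v be the associated bilinear form on V = F₂⁵. Then there is no basis e₁, e₂, e₃, e₄, e₅ of V such that (eᵢ, eⱼ) = 0 for all i > j and (eᵢ, eᵢ) = 1 for all i. -/

import Mathlib

/-- The matrix `Ā` of Statement 6. -/
abbrev stmt6Mat : Matrix (Fin 5) (Fin 5) (ZMod 2) :=
  !![1,1,0,0,0; 1,1,1,0,0; 1,1,1,1,0; 0,1,1,1,1; 0,0,1,1,1]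

set_option maxHeartbeats 4000000 in
set_option maxRecDepth 10000 in
set_option synthInstance.maxSize 2000 in
set_option synthInstance.maxHeartbeats 1000000 in
/-- Finite check: there are no four vectors `v₁, v₂, v₃, v₄` in `F₂⁵` with
`(vᵢ, vᵢ) = 1` and `(vᵢ, vⱼ) = 0` for `i > j` (no independence needed). -/
private lemma key_stmt6 :
    ∀ v1 : Fin 5 → ZMod 2, dotProduct v1 (stmt6Mat.mulVec v1) = 1 →
    ∀ v2 : Fin 5 → ZMod 2, dotProduct v2 (stmt6Mat.mulVec v2) = 1 →
      dotProduct v2 (stmt6Mat.mulVec v1) = 0 →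
    ∀ v3 : Fin 5 → ZMod 2, dotProduct v3 (stmt6Mat.mulVec v3) = 1 →
      dotProduct v3 (stmt6Mat.mulVec v1) = 0 →
      dotProduct v3 (stmt6Mat.mulVec v2) = 0 →
    ∀ v4 : Fin 5 → ZMod 2, dotProduct v4 (stmt6Mat.mulVec v4) = 1 →
      dotProduct v4 (stmt6Mat.mulVec v1) = 0 →
      dotProduct v4 (stmt6Mat.mulVec v2) = 0 →
      dotProduct v4 (stmt6Mat.mulVec v3) = 0 →
    False := by decide

/-- Let `Ā` be the given `5×5` matrix over `F₂ = ℤ/2ℤ` and let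
`(u,v) = uᵀ Ā v` be the associated bilinear form on `V = F₂⁵`. Then there is no basis
`e₁, …, e₅` of `V` with `(eᵢ, eⱼ) = 0` for `i > j` and `(eᵢ, eᵢ) = 1` for all `i`. -/
theorem stmt_6 (A : Matrix (Fin 5) (Fin 5) (ZMod 2))
    (hA : A = !![1,1,0,0,0; 1,1,1,0,0; 1,1,1,1,0; 0,1,1,1,1; 0,0,1,1,1]) :
    ¬ ∃ e : Module.Basis (Fin 5) (ZMod 2) (Fin 5 → ZMod 2),
        (∀ i j : Fin 5, j < i → dotProduct (e i) (A.mulVec (e j)) = 0) ∧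
        (∀ i : Fin 5, dotProduct (e i) (A.mulVec (e i)) = 1) := by
  subst hA
  rintro ⟨e, h1, h2⟩
  exact key_stmt6 (e 0) (h2 0)
    (e 1) (h2 1) (h1 1 0 (by decide))
    (e 2) (h2 2) (h1 2 0 (by decide)) (h1 2 1 (by decide))
    (e 3) (h2 3) (h1 3 0 (by decide)) (h1 3 1 (by decide)) (h1 3 2 (by decide))
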